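/- Let p be a prime, let d ≥ 2 be an integer not divisible by p, and let N be an integer with 2 ≤ N < p. Let δ_1 < δ_2 < ⋯ < δ_n be integers with 1 ≤ δ_i ≤ N and d ∤ δ_i for all i, set m = ⌊N/d⌋ + 1, and assume m + n ≤ N. Then the determinant of the n × n rational matrix with (i,j) entry binom(δ_i/d, m + j − 1), where binom(x,k) := x(x−1)⋯(x−k+1)/k!, is a nonzero rational number whose p-adic valuation is 0 (i.e., it is a p-adic unit). -/

import Mathlib

/-- The generalized binomial coefficient `binom(x,k) = x(x-1)⋯(x-k+1)/k!` for `x ∈ ℚ`. -/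
def qBinom (x : ℚ) (j : ℕ) : ℚ :=
  (∏ i ∈ Finset.range j, (x - (i : ℚ))) / (j.factorial : ℚ)


open Finset Polynomial in
lemma aux_mul_val (p : ℕ) [Fact p.Prime] {a b : ℚ}
    (ha : a ≠ 0 ∧ padicValRat p a = 0) (hb : b ≠ 0 ∧ padicValRat p b = 0) :
    a * b ≠ 0 ∧ padicValRat p (a * b) = 0 :=
  ⟨mul_ne_zero ha.1 hb.1, by rw [padicValRat.mul ha.1 hb.1, ha.2, hb.2, add_zero]⟩

lemma aux_prod_val_zero (p : ℕ) [Fact p.Prime] {ι : Type*} (s : Finset ι) (f : ι → ℚ)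
    (h : ∀ i ∈ s, f i ≠ 0 ∧ padicValRat p (f i) = 0) :
    (∏ i ∈ s, f i) ≠ 0 ∧ padicValRat p (∏ i ∈ s, f i) = 0 := by
  classical
  induction s using Finset.cons_induction with
  | empty => simp
  | cons a s ha ih =>
    rw [Finset.prod_cons]
    exact aux_mul_val p (h a (Finset.mem_cons_self a s))
      (ih fun i hi => h i (Finset.mem_cons_of_mem hi))

lemma aux_int_val (p : ℕ) [Fact p.Prime] (z : ℤ) (hz : z ≠ 0) (hzp : ¬ p ∣ z.natAbs) :
    ((z : ℚ) ≠ 0) ∧ padicValRat p (z : ℚ) = 0 := by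
  refine ⟨Int.cast_ne_zero.mpr hz, ?_⟩
  rw [padicValRat.of_int, padicValInt]
  norm_cast
  exact padicValNat.eq_zero_of_not_dvd hzp

lemma aux_small_int_val (p : ℕ) [Fact p.Prime] (z : ℤ) (hz : z ≠ 0) (hzp : z.natAbs < p) :
    ((z : ℚ) ≠ 0) ∧ padicValRat p (z : ℚ) = 0 := by
  refine aux_int_val p z hz fun hdvd => ?_
  have := Nat.le_of_dvd (Int.natAbs_pos.mpr hz) hdvd
  omega

lemma aux_div_val (p : ℕ) [Fact p.Prime] {a b : ℚ}
    (ha : a ≠ 0 ∧ padicValRat p a = 0) (hb : b ≠ 0 ∧ padicValRat p b = 0) :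
    a / b ≠ 0 ∧ padicValRat p (a / b) = 0 :=
  ⟨div_ne_zero ha.1 hb.1, by rw [padicValRat.div ha.1 hb.1, ha.2, hb.2, sub_zero]⟩

open Finset Polynomial in
lemma aux_det_factor (n m : ℕ) (x : Fin n → ℚ) :
    (Matrix.of fun i j : Fin n => qBinom (x i) (m + (j : ℕ))).det =
      (∏ j : Fin n, (((m + (j : ℕ)).factorial : ℚ))⁻¹) *
        ((∏ i : Fin n, ∏ k ∈ Finset.range m, (x i - (k : ℚ))) *
          (∏ i : Fin n, ∏ j ∈ Finset.Ioi i, (x j - x i))) := by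
  set q : Fin n → ℚ[X] := fun j => ∏ t ∈ Finset.range (j : ℕ), (X - C ((m + t : ℕ) : ℚ)) with hq
  have hqmonic : ∀ j, (q j).Monic := fun j =>
    monic_prod_of_monic _ _ fun t _ => monic_X_sub_C _
  have hqdeg : ∀ j : Fin n, (q j).natDegree = (j : ℕ) := by
    intro j
    rw [hq, natDegree_prod_of_monic _ _ fun t _ => monic_X_sub_C _]
    simp only [natDegree_X_sub_C]
    simp
  have hmat : (Matrix.of fun i j : Fin n => qBinom (x i) (m + (j : ℕ))) =
      Matrix.of fun i j : Fin n =>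
        (((m + (j : ℕ)).factorial : ℚ))⁻¹ *
          ((∏ k ∈ Finset.range m, (x i - (k : ℚ))) * (q j).eval (x i)) := by
    ext i j
    simp only [Matrix.of_apply, qBinom, hq]
    rw [Finset.prod_range_add, eval_prod]
    simp only [eval_sub, eval_X, eval_C]
    push_cast
    ring
  rw [hmat, Matrix.det_mul_row (A := fun i j : Fin n =>
    (∏ k ∈ Finset.range m, (x i - (k : ℚ))) * eval (x i) (q j))]
  rw [show (Matrix.det fun i j : Fin n =>
        (∏ k ∈ Finset.range m, (x i - (k : ℚ))) * eval (x i) (q j))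
      = (∏ i : Fin n, ∏ k ∈ Finset.range m, (x i - (k : ℚ))) *
          (Matrix.of fun i j : Fin n => (q j).eval (x i)).det
    from Matrix.det_mul_column _ _]
  rw [← Matrix.det_eval_matrixOfPolynomials_eq_det_vandermonde x q hqdeg hqmonic,
    Matrix.det_vandermonde]

/-- Let `p` be a prime, `d ≥ 2` an integer not divisible by `p`, and `N` an integer with
`2 ≤ N < p`.  Let `δ_1 < δ_2 < ⋯ < δ_n` be integers with `1 ≤ δ_i ≤ N` and `d ∤ δ_i`, set
`m = ⌊N/d⌋ + 1`, and assume `m + n ≤ N`.  Then the determinant of the `n × n` rational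
matrix with `(i,j)` entry `binom(δ_i/d, m+j-1)` is a nonzero rational number of `p`-adic
valuation `0` (a `p`-adic unit). -/
theorem det_binomial_matrix_padic_unit (p : ℕ) (hp : p.Prime)
    (d : ℕ) (hd : 2 ≤ d) (hpd : ¬ p ∣ d)
    (N : ℕ) (hN2 : 2 ≤ N) (hNp : N < p)
    (n : ℕ) (δ : Fin n → ℕ) (hδ : StrictMono δ)
    (hδ1 : ∀ i, 1 ≤ δ i) (hδN : ∀ i, δ i ≤ N) (hdvd : ∀ i, ¬ d ∣ δ i)
    (hmn : N / d + 1 + n ≤ N) :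
    (Matrix.of fun i j : Fin n =>
        qBinom ((δ i : ℚ) / (d : ℚ)) (N / d + 1 + (j : ℕ))).det ≠ 0 ∧
      padicValRat p (Matrix.of fun i j : Fin n =>
        qBinom ((δ i : ℚ) / (d : ℚ)) (N / d + 1 + (j : ℕ))).det = 0 := by
  haveI : Fact p.Prime := ⟨hp⟩
  have hd0 : (0 : ℕ) < d := by omega
  have hdq : ((d : ℤ) : ℚ) ≠ 0 ∧ padicValRat p ((d : ℤ) : ℚ) = 0 :=
    aux_int_val p d (by exact_mod_cast hd0.ne') (by simpa using hpd)
  rw [aux_det_factor n (N / d + 1) (fun i => (δ i : ℚ) / (d : ℚ))]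
  refine aux_mul_val p ?_ (aux_mul_val p ?_ ?_)
  · -- factorials
    refine aux_prod_val_zero p _ _ fun j _ => ?_
    have hlt : N / d + 1 + (j : ℕ) < p := by
      have := j.2; omega
    have hfac : ((N / d + 1 + (j : ℕ)).factorial : ℚ) ≠ 0 ∧
        padicValRat p ((N / d + 1 + (j : ℕ)).factorial : ℚ) = 0 := by
      have : ¬ p ∣ (N / d + 1 + (j : ℕ)).factorial := by
        rw [hp.dvd_factorial]; omega
      have h0 : (N / d + 1 + (j : ℕ)).factorial ≠ 0 := Nat.factorial_ne_zero _
      constructor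
      · exact_mod_cast h0
      · rw [padicValRat.of_nat]
        exact_mod_cast padicValNat.eq_zero_of_not_dvd this
    exact ⟨inv_ne_zero hfac.1, by rw [padicValRat.inv, hfac.2, neg_zero]⟩
  · -- ∏ i ∏ k < m, (δ i / d - k)
    refine aux_prod_val_zero p _ _ fun i _ => ?_
    refine aux_prod_val_zero p _ _ fun k hk => ?_
    rw [Finset.mem_range] at hk
    have hkd : k * d ≤ N := by
      calc k * d ≤ (N / d) * d := Nat.mul_le_mul_right d (by omega)
      _ ≤ N := Nat.div_mul_le_self N d
    set z : ℤ := (δ i : ℤ) - k * d with hz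
    have hzne : z ≠ 0 := by
      intro h
      apply hdvd i
      have h' : (δ i : ℤ) = ((k * d : ℕ) : ℤ) := by push_cast; omega
      have hnat : δ i = k * d := by exact_mod_cast h'
      exact ⟨k, by rw [hnat, Nat.mul_comm]⟩
    have hznum : ((δ i : ℚ) / (d : ℚ)) - (k : ℚ) = (z : ℚ) / ((d : ℤ) : ℚ) := by
      field_simp [hz]
      push_cast
      rw [hz]; push_cast; ring
    rw [hznum]
    refine aux_div_val p (aux_small_int_val p z hzne ?_) hdq
    have h1 : 1 ≤ δ i := hδ1 i
    have h2 : δ i ≤ N := hδN i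
    have hkd' : (k : ℤ) * d ≤ N := by exact_mod_cast hkd
    have hNp' : (N : ℤ) < p := by exact_mod_cast hNp
    have h2' : (δ i : ℤ) ≤ N := by exact_mod_cast h2
    have h1' : (1 : ℤ) ≤ δ i := by exact_mod_cast h1
    omega
  · -- vandermonde factors
    refine aux_prod_val_zero p _ _ fun i _ => ?_
    refine aux_prod_val_zero p _ _ fun j hj => ?_
    rw [Finset.mem_Ioi] at hj
    have hij : δ i < δ j := hδ hj
    set z : ℤ := (δ j : ℤ) - δ i with hz
    have hznum : ((δ j : ℚ) / (d : ℚ)) - ((δ i : ℚ) / (d : ℚ)) = (z : ℚ) / ((d : ℤ) : ℚ) := by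
      rw [div_sub_div_same, hz]
      push_cast
      ring_nf
    rw [hznum]
    refine aux_div_val p (aux_small_int_val p z (by omega) ?_) hdq
    have h2 : δ j ≤ N := hδN j
    omega
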